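/- Under the assumptions of the previous recursion setup, if lim_{j→∞} ‖S_j ⋯ S_0‖_{L(V⊗V)} = 0, then the zero solution of the recursion X^{j+1} = (D + E^j)X^j is asymptotically mean-square stable: for any square-integrable F_0-measurable initial value X^0, one has E[‖X^j‖²] → 0 as j → ∞, and moreover for every ε > 0 there is δ > 0 such that E[‖X^0‖²] < δ implies E[‖X^j‖²] < ε for all j. -/

import Mathlib

open MeasureTheory Filter
open scoped Kronecker

noncomputable section

/-- A solution process of the linear recursion `X^{j+1} = (D + E^j) X^j` with
`F_0`-measurable square-integrable initial value (all iterates square-integrable, so that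
all tensor expectations exist). -/
def IsSolution {Ω : Type*} {m0 : MeasurableSpace Ω} (μ : MeasureTheory.Measure Ω)
    (ℱ : MeasureTheory.Filtration ℕ m0) {N : ℕ}
    (D : Matrix (Fin N) (Fin N) ℝ) (E : ℕ → Ω → Matrix (Fin N) (Fin N) ℝ)
    (X : ℕ → Ω → Fin N → ℝ) : Prop :=
  (∀ j ω, X (j + 1) ω = (D + E j ω).mulVec (X j ω))
    ∧ (∀ k, StronglyMeasurable[ℱ 0] fun ω => X 0 ω k)
    ∧ (∀ j k, MeasureTheory.MemLp (fun ω => X j ω k) 2 μ)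

/-- The mean-square (second moment) `E[‖X^j‖²]` of a solution process. -/
noncomputable def secondMoment {Ω : Type*} {m0 : MeasurableSpace Ω}
    (μ : MeasureTheory.Measure Ω) {N : ℕ} (X : ℕ → Ω → Fin N → ℝ) (j : ℕ) : ℝ :=
  ∫ ω, ∑ k, (X j ω k) ^ 2 ∂μ

/-- Mean-square stability of the zero solution of the recursion `X^{j+1} = (D + E^j)X^j`. -/
def MeanSquareStable {Ω : Type*} {m0 : MeasurableSpace Ω} (μ : MeasureTheory.Measure Ω)
    (ℱ : MeasureTheory.Filtration ℕ m0) {N : ℕ}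
    (D : Matrix (Fin N) (Fin N) ℝ) (E : ℕ → Ω → Matrix (Fin N) (Fin N) ℝ) : Prop :=
  ∀ ε > (0 : ℝ), ∃ δ > (0 : ℝ), ∀ X : ℕ → Ω → Fin N → ℝ,
    IsSolution μ ℱ D E X → secondMoment μ X 0 < δ → ∀ j, secondMoment μ X j < ε

/-- Asymptotic mean-square stability of the zero solution: mean-square stability together with
the existence of `δ > 0` such that `E[‖X^0‖²] < δ` implies `E[‖X^j‖²] → 0`. -/
def AsympMeanSquareStable {Ω : Type*} {m0 : MeasurableSpace Ω} (μ : MeasureTheory.Measure Ω)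
    (ℱ : MeasureTheory.Filtration ℕ m0) {N : ℕ}
    (D : Matrix (Fin N) (Fin N) ℝ) (E : ℕ → Ω → Matrix (Fin N) (Fin N) ℝ) : Prop :=
  MeanSquareStable μ ℱ D E ∧
    ∃ δ > (0 : ℝ), ∀ X : ℕ → Ω → Fin N → ℝ,
      IsSolution μ ℱ D E X → secondMoment μ X 0 < δ →
        Filter.Tendsto (secondMoment μ X) Filter.atTop (nhds 0)

section Aux

variable {Ω : Type*} {m0 : MeasurableSpace Ω} {μ : Measure Ω} [IsProbabilityMeasure μ]
  {m : MeasurableSpace Ω}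

/-- Product of two L² functions is integrable (via AM-GM). -/
lemma aux_int_mul {f g : Ω → ℝ} (hf : MemLp f 2 μ) (hg : MemLp g 2 μ) :
    Integrable (fun ω => f ω * g ω) μ := by
  refine Integrable.mono' ((hf.integrable_sq.add hg.integrable_sq).div_const 2)
    (hf.aestronglyMeasurable.mul hg.aestronglyMeasurable) (ae_of_all _ fun ω => ?_)
  rw [Real.norm_eq_abs, abs_le]
  simp only [Pi.add_apply]
  constructor <;> nlinarith [sq_nonneg (f ω + g ω), sq_nonneg (f ω - g ω)]

/-- Pull-out value: if `E[g | m]` is a.e. the constant `c`, then for `m`-measurable `f`,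
`E[f g] = c E[f]`. -/
lemma aux_integral_mul (hm : m ≤ m0) {f g : Ω → ℝ}
    (hf : StronglyMeasurable[m] f) (hg : Integrable g μ)
    (hfg : Integrable (fun ω => f ω * g ω) μ) {c : ℝ}
    (hc : μ[g|m] =ᵐ[μ] fun _ => c) :
    ∫ ω, f ω * g ω ∂μ = c * ∫ ω, f ω ∂μ := by
  have h1 : μ[(f * g)|m] =ᵐ[μ] fun ω => f ω * c := by
    filter_upwards [condExp_mul_of_stronglyMeasurable_left hf hfg hg, hc] with ω h1 h2
    rw [h1, Pi.mul_apply, h2]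
  calc ∫ ω, f ω * g ω ∂μ = ∫ ω, (μ[(f * g)|m]) ω ∂μ := (integral_condExp hm).symm
    _ = ∫ ω, f ω * c ∂μ := integral_congr_ae h1
    _ = c * ∫ ω, f ω ∂μ := by rw [integral_mul_const]; ring

lemma aux_condexp_const_eq (hm : m ≤ m0) {g : Ω → ℝ} {c : ℝ}
    (hc : μ[g|m] =ᵐ[μ] fun _ => c) (hg : Integrable g μ) : c = ∫ ω, g ω ∂μ := by
  have := integral_condExp hm (f := g) (μ := μ)
  rw [integral_congr_ae hc] at this
  simpa using this

/-- Pull-out integrability: nonneg `m`-measurable integrable `f`, nonneg integrable `g` with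
deterministic conditional expectation, then `f * g` is integrable. -/
lemma aux_integrable_mul (hm : m ≤ m0) {f g : Ω → ℝ}
    (hf : StronglyMeasurable[m] f) (hf0 : ∀ ω, 0 ≤ f ω) (hfi : Integrable f μ)
    (hg : Integrable g μ) (hg0 : ∀ ω, 0 ≤ g ω) {c : ℝ}
    (hc : μ[g|m] =ᵐ[μ] fun _ => c) :
    Integrable (fun ω => f ω * g ω) μ := by
  have hc0 : 0 ≤ c := by
    rw [aux_condexp_const_eq hm hc hg]
    exact integral_nonneg hg0
  set fn : ℕ → Ω → ℝ := fun n ω => min (f ω) n with hfn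
  have hfn_meas : ∀ n, StronglyMeasurable[m] (fn n) := fun n =>
    hf.inf stronglyMeasurable_const
  have hfn_nonneg : ∀ n ω, 0 ≤ fn n ω := fun n ω => le_min (hf0 ω) n.cast_nonneg
  have hfn_le : ∀ n ω, fn n ω ≤ f ω := fun n ω => min_le_left _ _
  have hfn_int : ∀ n, Integrable (fun ω => fn n ω * g ω) μ := fun n =>
    hg.bdd_mul (c := n) ((hfn_meas n).mono hm).aestronglyMeasurable
      (ae_of_all _ fun ω => by
        rw [Real.norm_eq_abs, abs_of_nonneg (hfn_nonneg n ω)]; exact min_le_right _ _)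
  have hval : ∀ n, ∫ ω, fn n ω * g ω ∂μ ≤ c * ∫ ω, f ω ∂μ := by
    intro n
    rw [aux_integral_mul hm (hfn_meas n) hg (hfn_int n) hc]
    refine mul_le_mul_of_nonneg_left (integral_mono ?_ hfi fun ω => hfn_le n ω) hc0
    exact hfi.mono' ((hfn_meas n).mono hm).aestronglyMeasurable
      (ae_of_all _ fun ω => by
        rw [Real.norm_eq_abs, abs_of_nonneg (hfn_nonneg n ω)]
        exact hfn_le n ω)
  have hfgsm : AEStronglyMeasurable[m0] (fun ω => f ω * g ω) μ :=
    (hf.mono hm).aestronglyMeasurable.mul hg.aestronglyMeasurable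
  refine ⟨hfgsm, ?_⟩
  rw [hasFiniteIntegral_iff_norm]
  have hsup : ∀ ω, (⨆ n : ℕ, ENNReal.ofReal (fn n ω * g ω)) = ENNReal.ofReal (f ω * g ω) := by
    intro ω
    refine le_antisymm (iSup_le fun n => ENNReal.ofReal_le_ofReal
      (mul_le_mul_of_nonneg_right (hfn_le n ω) (hg0 ω))) ?_
    refine le_iSup_of_le ⌈f ω⌉₊ (le_of_eq ?_)
    congr 1
    rw [hfn]
    simp only
    rw [min_eq_left (Nat.le_ceil _)]
  have key : ∫⁻ ω, ENNReal.ofReal (f ω * g ω) ∂μ ≤ ENNReal.ofReal (c * ∫ ω, f ω ∂μ) := by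
    rw [← lintegral_congr hsup]
    rw [lintegral_iSup' (fun n => ((hfn_int n).aestronglyMeasurable.aemeasurable).ennreal_ofReal)
      (ae_of_all _ fun ω i j hij => ENNReal.ofReal_le_ofReal
        (mul_le_mul_of_nonneg_right (min_le_min le_rfl (Nat.cast_le.mpr hij)) (hg0 ω)))]
    refine iSup_le fun n => ?_
    rw [← ofReal_integral_eq_lintegral_ofReal (hfn_int n)
      (ae_of_all _ fun ω => mul_nonneg (hfn_nonneg n ω) (hg0 ω))]
    exact ENNReal.ofReal_le_ofReal (hval n)
  calc ∫⁻ ω, ENNReal.ofReal ‖f ω * g ω‖ ∂μ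
      = ∫⁻ ω, ENNReal.ofReal (f ω * g ω) ∂μ := by
        refine lintegral_congr fun ω => ?_
        rw [Real.norm_eq_abs, abs_of_nonneg (mul_nonneg (hf0 ω) (hg0 ω))]
    _ ≤ ENNReal.ofReal (c * ∫ ω, f ω ∂μ) := key
    _ < ⊤ := ENNReal.ofReal_lt_top


/-- coordinate bound in Euclidean space -/
lemma aux_coord_le {α : Type*} [Fintype α] (v : α → ℝ) (r : α) :
    |v r| ≤ ‖(WithLp.equiv 2 (α → ℝ)).symm v‖ := by
  rw [EuclideanSpace.norm_eq]
  rw [← Real.sqrt_sq_eq_abs]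
  refine Real.sqrt_le_sqrt ?_
  have h : (v r) ^ 2 = ‖(WithLp.equiv 2 (α → ℝ)).symm v r‖ ^ 2 := by
    rw [WithLp.equiv_symm_apply, PiLp.toLp_apply, Real.norm_eq_abs, sq_abs]
  rw [h]
  exact Finset.single_le_sum (f := fun i => ‖(WithLp.equiv 2 (α → ℝ)).symm v i‖ ^ 2)
    (fun i _ => sq_nonneg _) (Finset.mem_univ r)

lemma aux_norm_le {α : Type*} [Fintype α] (v : α → ℝ) {B : ℝ} (hB : 0 ≤ B)
    (h : ∀ r, |v r| ≤ B) :
    ‖(WithLp.equiv 2 (α → ℝ)).symm v‖ ≤ Real.sqrt (Fintype.card α) * B := by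
  rw [EuclideanSpace.norm_eq, ← Real.sqrt_sq hB, ← Real.sqrt_mul (by positivity)]
  refine Real.sqrt_le_sqrt ?_
  calc ∑ i, ‖(WithLp.equiv 2 (α → ℝ)).symm v i‖ ^ 2
      ≤ ∑ _i : α, B ^ 2 := by
        refine Finset.sum_le_sum fun i _ => ?_
        rw [WithLp.equiv_symm_apply, PiLp.toLp_apply, Real.norm_eq_abs]
        exact pow_le_pow_left₀ (abs_nonneg _) (h i) 2
    _ = (Fintype.card α) * B ^ 2 := by
        rw [Finset.sum_const, Finset.card_univ, nsmul_eq_mul]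

end Aux

/-- **Theorem 2.5.** Under the assumptions of the recursion setup (the family
`(E^j)` is `F`-compatible, square-integrable, with conditionally deterministic tensor
covariance), if `‖S_j ⋯ S_0‖_{L(V⊗V)} → 0` (where `S_j = D ⊗ D + E[E^j ⊗ E^j]`, and the
operator norm is that of the induced operator on the Euclidean tensor space), then the zero
solution of `X^{j+1} = (D + E^j)X^j` is asymptotically mean-square stable: every solution with
square-integrable `F_0`-measurable initial value satisfies `E[‖X^j‖²] → 0`, and for every
`ε > 0` there is `δ > 0` such that `E[‖X^0‖²] < δ` implies `E[‖X^j‖²] < ε` for all `j`. -/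
theorem stmt3
    {Ω : Type*} {m0 : MeasurableSpace Ω} (μ : Measure Ω) [IsProbabilityMeasure μ]
    (ℱ : Filtration ℕ m0) (N : ℕ)
    (D : Matrix (Fin N) (Fin N) ℝ)
    (E : ℕ → Ω → Matrix (Fin N) (Fin N) ℝ)
    (hmeasE : ∀ j k l, StronglyMeasurable[ℱ (j + 1)] fun ω => E j ω k l)
    (hL2E : ∀ j k l, MemLp (fun ω => E j ω k l) 2 μ)
    (hmean : ∀ j k l, μ[(fun ω => E j ω k l) | ℱ j] =ᵐ[μ] 0)
    (hcov : ∀ j (p q : Fin N × Fin N),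
      μ[(fun ω => (E j ω ⊗ₖ E j ω) p q) | ℱ j]
        =ᵐ[μ] fun _ => ∫ ω, (E j ω ⊗ₖ E j ω) p q ∂μ)
    (S : ℕ → Matrix (Fin N × Fin N) (Fin N × Fin N) ℝ)
    (hS : ∀ j, S j = D ⊗ₖ D + Matrix.of fun p q => ∫ ω, (E j ω ⊗ₖ E j ω) p q ∂μ)
    (P : ℕ → Matrix (Fin N × Fin N) (Fin N × Fin N) ℝ)
    (hP0 : P 0 = S 0) (hPs : ∀ j, P (j + 1) = S (j + 1) * P j)
    (hnorm : Tendsto (fun j => ‖Matrix.toEuclideanCLM (𝕜 := ℝ) (P j)‖) atTop (nhds 0)) :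
    (∀ X : ℕ → Ω → Fin N → ℝ, IsSolution μ ℱ D E X →
        Tendsto (secondMoment μ X) atTop (nhds 0))
      ∧ MeanSquareStable μ ℱ D E := by
  obtain ⟨C, hC⟩ : ∃ C : ℝ, ∀ j, ‖Matrix.toEuclideanCLM (𝕜 := ℝ) (P j)‖ ≤ C := by
    obtain ⟨C, hC⟩ := hnorm.bddAbove_range
    exact ⟨C, fun j => hC ⟨j, rfl⟩⟩
  have main : ∀ X : ℕ → Ω → Fin N → ℝ, IsSolution μ ℱ D E X →
      (∀ j, 0 ≤ secondMoment μ X j) ∧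
      (∀ j, secondMoment μ X (j + 1)
        ≤ (N : ℝ) ^ 2 * secondMoment μ X 0 * ‖Matrix.toEuclideanCLM (𝕜 := ℝ) (P j)‖) := by
    rintro X ⟨hrec, hmeas0, hL2⟩
    show (∀ j, 0 ≤ ∫ ω, ∑ k, (X j ω k) ^ 2 ∂μ) ∧
      (∀ j, (∫ ω, ∑ k, (X (j+1) ω k) ^ 2 ∂μ)
        ≤ (N : ℝ) ^ 2 * (∫ ω, ∑ k, (X 0 ω k) ^ 2 ∂μ)
          * ‖Matrix.toEuclideanCLM (𝕜 := ℝ) (P j)‖)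
    have hm : ∀ j, (ℱ j : MeasurableSpace Ω) ≤ m0 := fun j => ℱ.le j
    -- measurability of the iterates
    have measX : ∀ j k, StronglyMeasurable[ℱ j] fun ω => X j ω k := by
      intro j
      induction j with
      | zero => exact hmeas0
      | succ j ih =>
        intro k
        have hXe : (fun ω => X (j + 1) ω k) = fun ω => ∑ l, (D k l + E j ω k l) * X j ω l := by
          funext ω
          rw [hrec j ω]
          simp [Matrix.mulVec, dotProduct, Matrix.add_apply]
        rw [hXe]
        exact Finset.stronglyMeasurable_fun_sum _ fun l _ =>
          (stronglyMeasurable_const.add (hmeasE j k l)).mul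
            ((ih l).mono (ℱ.mono (Nat.le_succ j)))
    -- basic integrabilities
    have hYsq : ∀ j k, Integrable (fun ω => X j ω k ^ 2) μ := fun j k => (hL2 j k).integrable_sq
    have hYY : ∀ j k l, Integrable (fun ω => X j ω k * X j ω l) μ :=
      fun j k l => aux_int_mul (hL2 j k) (hL2 j l)
    have hAA : ∀ j (p k q l : Fin N), Integrable (fun ω => E j ω p k * E j ω q l) μ :=
      fun j p k q l => aux_int_mul (hL2E j p k) (hL2E j q l)
    have hcov' : ∀ j (p k q l : Fin N),
        μ[(fun ω => E j ω p k * E j ω q l)|ℱ j]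
          =ᵐ[μ] fun _ => ∫ ω, E j ω p k * E j ω q l ∂μ := by
      intro j p k q l
      have h := hcov j (p, q) (k, l)
      simpa [Matrix.kroneckerMap_apply] using h
    have hkey : ∀ j (p k : Fin N), Integrable (fun ω => X j ω k ^ 2 * E j ω p k ^ 2) μ := by
      intro j p k
      have hsq : (fun ω => E j ω p k ^ 2) = fun ω => E j ω p k * E j ω p k := by
        funext ω; ring
      have hXsq : (fun ω => X j ω k ^ 2) = fun ω => X j ω k * X j ω k := by
        funext ω; ring
      have h := aux_integrable_mul (μ := μ) (hm j)
        (f := fun ω => X j ω k ^ 2) (g := fun ω => E j ω p k ^ 2)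
        (by rw [hXsq]; exact (measX j k).mul (measX j k))
        (fun ω => sq_nonneg _) (hYsq j k)
        (by rw [hsq]; exact hAA j p k p k) (fun ω => sq_nonneg _)
        (c := ∫ ω, E j ω p k * E j ω p k ∂μ) (by rw [hsq]; exact hcov' j p k p k)
      exact h
    have h4 : ∀ j (p k q l : Fin N),
        Integrable (fun ω => X j ω k * X j ω l * (E j ω p k * E j ω q l)) μ := by
      intro j p k q l
      have hbd : Integrable
          (fun ω => (X j ω k ^ 2 * E j ω p k ^ 2 + X j ω l ^ 2 * E j ω q l ^ 2) / 2) μ :=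
        ((hkey j p k).add (hkey j q l)).div_const 2
      refine Integrable.mono' hbd
        (((((measX j k).mono (hm j)).mul ((measX j l).mono (hm j))).mul
          (((hmeasE j p k).mono (hm (j + 1))).mul
            ((hmeasE j q l).mono (hm (j + 1))))).aestronglyMeasurable)
        (ae_of_all _ fun ω => ?_)
      rw [Real.norm_eq_abs, abs_le]
      constructor <;> nlinarith [sq_nonneg (X j ω k * E j ω p k + X j ω l * E j ω q l),
        sq_nonneg (X j ω k * E j ω p k - X j ω l * E j ω q l)]
    have h3 : ∀ j (a k l : Fin N),
        Integrable (fun ω => X j ω k * X j ω l * E j ω a l) μ := by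
      intro j a k l
      have hbd : Integrable
          (fun ω => (X j ω k ^ 2 + X j ω l ^ 2 * E j ω a l ^ 2) / 2) μ :=
        ((hYsq j k).add (hkey j a l)).div_const 2
      refine Integrable.mono' hbd
        ((((measX j k).mono (hm j)).mul ((measX j l).mono (hm j))).mul
          ((hmeasE j a l).mono (hm (j + 1)))).aestronglyMeasurable
        (ae_of_all _ fun ω => ?_)
      rw [Real.norm_eq_abs, abs_le]
      constructor <;> nlinarith [sq_nonneg (X j ω k + X j ω l * E j ω a l),
        sq_nonneg (X j ω k - X j ω l * E j ω a l)]
    -- the matrix of second moments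
    set Z : ℕ → Fin N × Fin N → ℝ := fun j r => ∫ ω, X j ω r.1 * X j ω r.2 ∂μ with hZdef
    have hZrec : ∀ j, Z (j + 1) = (S j).mulVec (Z j) := by
      intro j
      funext r
      obtain ⟨p, q⟩ := r
      have expand : (fun ω => X (j + 1) ω p * X (j + 1) ω q) =
          fun ω => ∑ k, ∑ l,
            ((D p k + E j ω p k) * X j ω k) * ((D q l + E j ω q l) * X j ω l) := by
        funext ω
        rw [hrec j ω]
        rw [show ((D + E j ω).mulVec (X j ω) p) = ∑ k, (D p k + E j ω p k) * X j ω k from by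
          simp [Matrix.mulVec, dotProduct, Matrix.add_apply]]
        rw [show ((D + E j ω).mulVec (X j ω) q) = ∑ l, (D q l + E j ω q l) * X j ω l from by
          simp [Matrix.mulVec, dotProduct, Matrix.add_apply]]
        rw [Finset.sum_mul_sum]
      have hexp : ∀ k l : Fin N,
          (fun ω => ((D p k + E j ω p k) * X j ω k) * ((D q l + E j ω q l) * X j ω l))
            = fun ω => D p k * D q l * (X j ω k * X j ω l)
              + D p k * (X j ω k * X j ω l * E j ω q l)
              + D q l * (X j ω l * X j ω k * E j ω p k)
              + X j ω k * X j ω l * (E j ω p k * E j ω q l) := by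
        intro k l; funext ω; ring
      have hterm : ∀ k l : Fin N, Integrable
          (fun ω => ((D p k + E j ω p k) * X j ω k) * ((D q l + E j ω q l) * X j ω l)) μ := by
        intro k l
        rw [hexp k l]
        exact ((((hYY j k l).const_mul _).add ((h3 j q k l).const_mul _)).add
          ((h3 j p l k).const_mul _)).add (h4 j p k q l)
      have hval : ∀ k l : Fin N,
          (∫ ω, ((D p k + E j ω p k) * X j ω k) * ((D q l + E j ω q l) * X j ω l) ∂μ)
            = S j (p, q) (k, l) * Z j (k, l) := by
        intro k l
        rw [hexp k l]
        have hI1 : Integrable (fun ω => D p k * D q l * (X j ω k * X j ω l)) μ :=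
          (hYY j k l).const_mul _
        have hI2 : Integrable (fun ω => D p k * (X j ω k * X j ω l * E j ω q l)) μ :=
          (h3 j q k l).const_mul _
        have hI3 : Integrable (fun ω => D q l * (X j ω l * X j ω k * E j ω p k)) μ :=
          (h3 j p l k).const_mul _
        have hI12 : Integrable (fun ω => D p k * D q l * (X j ω k * X j ω l)
            + D p k * (X j ω k * X j ω l * E j ω q l)) μ := hI1.add hI2
        have hI123 : Integrable (fun ω => D p k * D q l * (X j ω k * X j ω l)
            + D p k * (X j ω k * X j ω l * E j ω q l)
            + D q l * (X j ω l * X j ω k * E j ω p k)) μ := hI12.add hI3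
        rw [integral_add hI123 (h4 j p k q l), integral_add hI12 hI3, integral_add hI1 hI2,
          integral_const_mul, integral_const_mul, integral_const_mul]
        have hv1 : (∫ ω, X j ω k * X j ω l * E j ω q l ∂μ) = 0 := by
          have h0 : μ[(fun ω => E j ω q l)|ℱ j] =ᵐ[μ] fun _ => (0 : ℝ) := hmean j q l
          rw [aux_integral_mul (hm j) (f := fun ω => X j ω k * X j ω l)
            ((measX j k).mul (measX j l))
            ((hL2E j q l).integrable one_le_two) (h3 j q k l) h0]
          ring
        have hv2 : (∫ ω, X j ω l * X j ω k * E j ω p k ∂μ) = 0 := by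
          have h0 : μ[(fun ω => E j ω p k)|ℱ j] =ᵐ[μ] fun _ => (0 : ℝ) := hmean j p k
          rw [aux_integral_mul (hm j) (f := fun ω => X j ω l * X j ω k)
            ((measX j l).mul (measX j k))
            ((hL2E j p k).integrable one_le_two) (h3 j p l k) h0]
          ring
        have hv3 : (∫ ω, X j ω k * X j ω l * (E j ω p k * E j ω q l) ∂μ)
            = (∫ ω, E j ω p k * E j ω q l ∂μ) * Z j (k, l) := by
          rw [aux_integral_mul (hm j) (f := fun ω => X j ω k * X j ω l)
            ((measX j k).mul (measX j l))
            (hAA j p k q l) (h4 j p k q l) (hcov' j p k q l)]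
        have hSapply : S j (p, q) (k, l)
            = D p k * D q l + ∫ ω, E j ω p k * E j ω q l ∂μ := by
          rw [hS j]
          simp [Matrix.add_apply, Matrix.kroneckerMap_apply]
        rw [hv1, hv2, hv3, hSapply]
        have hZval : Z j (k, l) = ∫ ω, X j ω k * X j ω l ∂μ := rfl
        rw [hZval]
        ring
      have hmv : (S j).mulVec (Z j) (p, q) = ∑ k, ∑ l, S j (p, q) (k, l) * Z j (k, l) := by
        rw [show (S j).mulVec (Z j) (p, q) = ∑ r : Fin N × Fin N, S j (p, q) r * Z j r from by
          simp [Matrix.mulVec, dotProduct]]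
        rw [Fintype.sum_prod_type]
      rw [hmv]
      calc Z (j + 1) (p, q) = ∫ ω, X (j + 1) ω p * X (j + 1) ω q ∂μ := rfl
        _ = ∫ ω, ∑ k, ∑ l,
              ((D p k + E j ω p k) * X j ω k) * ((D q l + E j ω q l) * X j ω l) ∂μ := by
            rw [expand]
        _ = ∑ k, ∑ l, ∫ ω,
              ((D p k + E j ω p k) * X j ω k) * ((D q l + E j ω q l) * X j ω l) ∂μ := by
            rw [integral_finset_sum _ fun k _ => integrable_finset_sum _ fun l _ => hterm k l]
            exact Finset.sum_congr rfl fun k _ => integral_finset_sum _ fun l _ => hterm k l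
        _ = ∑ k, ∑ l, S j (p, q) (k, l) * Z j (k, l) :=
            Finset.sum_congr rfl fun k _ => Finset.sum_congr rfl fun l _ => hval k l
    have hZP : ∀ j, Z (j + 1) = (P j).mulVec (Z 0) := by
      intro j
      induction j with
      | zero => rw [hZrec 0, hP0]
      | succ j ih => rw [hZrec (j + 1), ih, hPs j, Matrix.mulVec_mulVec]
    have hZdiag : ∀ j k, Z j (k, k) = ∫ ω, X j ω k ^ 2 ∂μ := by
      intro j k
      show (∫ ω, X j ω k * X j ω k ∂μ) = _
      congr 1
      funext ω
      ring
    have hsm : ∀ j, (∫ ω, ∑ k, X j ω k ^ 2 ∂μ) = ∑ k, Z j (k, k) := by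
      intro j
      rw [integral_finset_sum _ fun k _ => hYsq j k]
      exact Finset.sum_congr rfl fun k _ => (hZdiag j k).symm
    have hnonneg : ∀ j, 0 ≤ ∫ ω, ∑ k, X j ω k ^ 2 ∂μ := fun j =>
      integral_nonneg fun ω => Finset.sum_nonneg fun k _ => sq_nonneg _
    refine ⟨hnonneg, ?_⟩
    intro j
    set M := ∫ ω, ∑ k, X 0 ω k ^ 2 ∂μ with hMdef
    have hMnonneg : 0 ≤ M := hnonneg 0
    have hZkk_nonneg : ∀ k, 0 ≤ Z 0 (k, k) := by
      intro k
      rw [hZdiag 0 k]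
      exact integral_nonneg fun ω => sq_nonneg _
    have hZkkM : ∀ k, Z 0 (k, k) ≤ M := by
      intro k
      rw [hMdef, hsm 0]
      exact Finset.single_le_sum (f := fun i => Z 0 (i, i))
        (fun i _ => hZkk_nonneg i) (Finset.mem_univ k)
    have hZ0bound : ∀ r : Fin N × Fin N, |Z 0 r| ≤ M := by
      rintro ⟨k, l⟩
      have habs : |Z 0 (k, l)| ≤ ∫ ω, |X 0 ω k * X 0 ω l| ∂μ := by
        rw [show |Z 0 (k, l)| = ‖∫ ω, X 0 ω k * X 0 ω l ∂μ‖ from rfl]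
        exact (norm_integral_le_integral_norm _).trans (le_of_eq rfl)
      refine habs.trans ?_
      have hint : Integrable (fun ω => (X 0 ω k ^ 2 + X 0 ω l ^ 2) / 2) μ :=
        ((hYsq 0 k).add (hYsq 0 l)).div_const 2
      have h1 : (∫ ω, |X 0 ω k * X 0 ω l| ∂μ) ≤ ∫ ω, (X 0 ω k ^ 2 + X 0 ω l ^ 2) / 2 ∂μ := by
        refine integral_mono (hYY 0 k l).abs hint fun ω => ?_
        rw [abs_mul]
        nlinarith [sq_nonneg (|X 0 ω k| - |X 0 ω l|), sq_abs (X 0 ω k), sq_abs (X 0 ω l)]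
      refine h1.trans ?_
      have h2 : (∫ ω, (X 0 ω k ^ 2 + X 0 ω l ^ 2) / 2 ∂μ)
          = ((∫ ω, X 0 ω k ^ 2 ∂μ) + ∫ ω, X 0 ω l ^ 2 ∂μ) / 2 := by
        rw [integral_div, integral_add (hYsq 0 k) (hYsq 0 l)]
      rw [h2]
      have hk := hZkkM k
      have hl := hZkkM l
      rw [hZdiag 0 k] at hk
      rw [hZdiag 0 l] at hl
      linarith
    have hz0 : ‖(WithLp.equiv 2 (Fin N × Fin N → ℝ)).symm (Z 0)‖ ≤ (N : ℝ) * M := by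
      refine (aux_norm_le (Z 0) hMnonneg hZ0bound).trans ?_
      have hcard : Real.sqrt (Fintype.card (Fin N × Fin N)) = (N : ℝ) := by
        rw [Fintype.card_prod, Fintype.card_fin]
        rw [show ((N * N : ℕ) : ℝ) = (N : ℝ) ^ 2 by push_cast; ring]
        exact Real.sqrt_sq (Nat.cast_nonneg N)
      rw [hcard]
    have happ : (WithLp.equiv 2 (Fin N × Fin N → ℝ)).symm (Z (j + 1))
        = Matrix.toEuclideanCLM (𝕜 := ℝ) (P j)
            ((WithLp.equiv 2 (Fin N × Fin N → ℝ)).symm (Z 0)) := by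
      rw [WithLp.equiv_symm_apply, Matrix.toEuclideanCLM_toLp, hZP j]
    have hzj : ‖(WithLp.equiv 2 (Fin N × Fin N → ℝ)).symm (Z (j + 1))‖
        ≤ ‖Matrix.toEuclideanCLM (𝕜 := ℝ) (P j)‖ * ((N : ℝ) * M) := by
      rw [happ]
      exact (ContinuousLinearMap.le_opNorm _ _).trans
        (mul_le_mul_of_nonneg_left hz0 (norm_nonneg _))
    rw [hsm (j + 1)]
    calc ∑ k, Z (j + 1) (k, k)
        ≤ ∑ _k : Fin N, ‖(WithLp.equiv 2 (Fin N × Fin N → ℝ)).symm (Z (j + 1))‖ := by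
          refine Finset.sum_le_sum fun k _ => ?_
          exact (le_abs_self _).trans (aux_coord_le (Z (j + 1)) (k, k))
      _ = (N : ℝ) * ‖(WithLp.equiv 2 (Fin N × Fin N → ℝ)).symm (Z (j + 1))‖ := by
          rw [Finset.sum_const, Finset.card_univ, Fintype.card_fin, nsmul_eq_mul]
      _ ≤ (N : ℝ) * (‖Matrix.toEuclideanCLM (𝕜 := ℝ) (P j)‖ * ((N : ℝ) * M)) :=
          mul_le_mul_of_nonneg_left hzj (Nat.cast_nonneg N)
      _ = (N : ℝ) ^ 2 * M * ‖Matrix.toEuclideanCLM (𝕜 := ℝ) (P j)‖ := by ring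
  constructor
  · intro X hX
    obtain ⟨h0, hb⟩ := main X hX
    have h1 : Tendsto (fun j => secondMoment μ X (j + 1)) atTop (nhds 0) := by
      refine squeeze_zero (fun j => h0 (j + 1)) hb ?_
      have h2 := hnorm.const_mul ((N : ℝ) ^ 2 * secondMoment μ X 0)
      rw [mul_zero] at h2
      exact h2
    exact (tendsto_add_atTop_iff_nat 1).mp h1
  · show ∀ ε > (0 : ℝ), ∃ δ > (0 : ℝ), ∀ X : ℕ → Ω → Fin N → ℝ,
        IsSolution μ ℱ D E X → secondMoment μ X 0 < δ → ∀ j, secondMoment μ X j < ε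
    intro ε hε
    set K := max 1 ((N : ℝ) ^ 2 * C) with hK
    have hK1 : (1 : ℝ) ≤ K := le_max_left _ _
    have hKpos : (0 : ℝ) < K := lt_of_lt_of_le one_pos hK1
    refine ⟨ε / K, div_pos hε hKpos, ?_⟩
    intro X hX hδ j
    obtain ⟨h0, hb⟩ := main X hX
    have hM0 : 0 ≤ secondMoment μ X 0 := h0 0
    have hbound : secondMoment μ X j ≤ K * secondMoment μ X 0 := by
      cases j with
      | zero => nlinarith
      | succ j =>
        calc secondMoment μ X (j + 1)
            ≤ (N : ℝ) ^ 2 * secondMoment μ X 0 * ‖Matrix.toEuclideanCLM (𝕜 := ℝ) (P j)‖ := hb j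
          _ ≤ (N : ℝ) ^ 2 * secondMoment μ X 0 * C :=
              mul_le_mul_of_nonneg_left (hC j) (by positivity)
          _ = ((N : ℝ) ^ 2 * C) * secondMoment μ X 0 := by ring
          _ ≤ K * secondMoment μ X 0 :=
              mul_le_mul_of_nonneg_right (le_max_right _ _) hM0
    calc secondMoment μ X j ≤ K * secondMoment μ X 0 := hbound
      _ < K * (ε / K) := mul_lt_mul_of_pos_left hδ hKpos
      _ = ε := by field_simp


end
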